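/- arXiv:2206.06052 — 7 statements merged into one kernel-verified Lean document; each statement's English description precedes it below -/
import Mathlib

section
/- Let G be a finite simple graph and let v be a vertex of degree 3 in G. If the graph G − v obtained by deleting v has an odd 7-coloring, then G has an odd 7-coloring. -/
/-- A coloring `c` is an odd coloring of `G`: it is proper, and every
non-isolated vertex has some color appearing an odd number of times in its
neighborhood. -/
def IsOddColoring {V α : Type*} (G : SimpleGraph V) (c : V → α) : Prop :=
  (∀ u v, G.Adj u v → c u ≠ c v) ∧
  ∀ v, (G.neighborSet v).Nonempty → ∃ a : α, Odd {w | G.Adj v w ∧ c w = a}.ncard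

/-- `G` has an odd coloring using at most `k` colors. -/
def HasOddColoring {V : Type*} (G : SimpleGraph V) (k : ℕ) : Prop :=
  ∃ c : V → Fin k, IsOddColoring G c

/-- If `v` has degree 3 in `G` and `G - v` has an odd 7-coloring, then so does `G`. -/
theorem hasOddColoring_of_delete_degree_three {V : Type*} [Fintype V]
    (G : SimpleGraph V) (v : V) (hdeg : (G.neighborSet v).ncard = 3)
    (h : HasOddColoring (G.induce ({v}ᶜ : Set V)) 7) :
    HasOddColoring G 7 := by
  classical
  obtain ⟨c', hc'prop, hc'odd⟩ := h
  set G' := G.induce ({v}ᶜ : Set V) with hG'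
  -- witness odd color for each vertex of the induced graph
  set a : ({v}ᶜ : Set V) → Fin 7 := fun u =>
    if hu : (G'.neighborSet u).Nonempty then (hc'odd u hu).choose else 0 with ha_def
  have ha : ∀ u, ∀ _ : (G'.neighborSet u).Nonempty,
      Odd {w | G'.Adj u w ∧ c' w = a u}.ncard := by
    intro u hu
    have := (hc'odd u hu).choose_spec
    simp only [ha_def, dif_pos hu]; exact this
  -- the finset of neighbors of v
  have hSfin : (G.neighborSet v).Finite := Set.toFinite _
  set Sf : Finset V := hSfin.toFinset with hSf_def
  have hSf_card : Sf.card = 3 := by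
    rw [← hdeg, Set.ncard_eq_toFinset_card _ hSfin]
  have hmemSf : ∀ u, u ∈ Sf ↔ G.Adj v u := by
    intro u; simp [hSf_def, Set.Finite.mem_toFinset, SimpleGraph.mem_neighborSet]
  have hne_v : ∀ u, G.Adj v u → u ≠ v := by
    intro u hu hvu; subst hvu; exact G.irrefl hu
  -- forbidden colors
  set f1 : V → Fin 7 := fun u => if hu : u ≠ v then c' ⟨u, hu⟩ else 0 with hf1
  set f2 : V → Fin 7 := fun u => if hu : u ≠ v then a ⟨u, hu⟩ else 0 with hf2
  set F : Finset (Fin 7) := Sf.image f1 ∪ Sf.image f2 with hF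
  have hFcard : F.card ≤ 6 := by
    calc F.card ≤ (Sf.image f1).card + (Sf.image f2).card := Finset.card_union_le _ _
      _ ≤ Sf.card + Sf.card := by
          gcongr <;> exact Finset.card_image_le
      _ = 6 := by rw [hSf_card]
  have : (Fᶜ : Finset (Fin 7)).Nonempty := by
    rw [← Finset.card_pos, Finset.card_compl]
    simp only [Fintype.card_fin]
    omega
  obtain ⟨x, hx⟩ := this
  have hxF : x ∉ F := Finset.mem_compl.mp hx
  have hxf1 : ∀ u ∈ Sf, x ≠ f1 u := by
    intro u hu hxe
    exact hxF (Finset.mem_union_left _ (Finset.mem_image.mpr ⟨u, hu, hxe.symm⟩))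
  have hxf2 : ∀ u ∈ Sf, x ≠ f2 u := by
    intro u hu hxe
    exact hxF (Finset.mem_union_right _ (Finset.mem_image.mpr ⟨u, hu, hxe.symm⟩))
  -- the extended coloring
  set c : V → Fin 7 := fun u => if hu : u = v then x else c' ⟨u, hu⟩ with hc
  have hcv : c v = x := by simp [hc]
  have hcne : ∀ u (hu : u ≠ v), c u = c' ⟨u, hu⟩ := by
    intro u hu; simp [hc, hu]
  refine ⟨c, ?_, ?_⟩
  · -- proper
    intro u w huw
    by_cases hu : u = v
    · have hadj : G.Adj v w := hu ▸ huw
      have hwv : w ≠ v := hne_v w hadj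
      rw [hu, hcv, hcne w hwv]
      have hfw : f1 w = c' ⟨w, hwv⟩ := by simp [hf1, hwv]
      rw [← hfw]
      exact hxf1 w ((hmemSf w).mpr hadj)
    · by_cases hw : w = v
      · have hadj : G.Adj v u := (hw ▸ huw).symm
        have huv : u ≠ v := hu
        rw [hw, hcv, hcne u huv]
        have hfu : f1 u = c' ⟨u, huv⟩ := by simp [hf1, huv]
        rw [← hfu]
        exact fun hxe => (hxf1 u ((hmemSf u).mpr hadj) hxe.symm)
      · rw [hcne u hu, hcne w hw]
        exact hc'prop ⟨u, hu⟩ ⟨w, hw⟩ huw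
  · -- odd condition
    intro u hu
    by_cases huv : u = v
    · -- at v itself: 3 neighbors, some color appears oddly
      subst huv
      by_contra hcon
      push_neg at hcon
      have hfiber : ∀ b : Fin 7,
          {w | G.Adj u w ∧ c w = b} = ↑(Sf.filter (fun w => c w = b)) := by
        intro b; ext w
        simp [Finset.mem_filter, hmemSf, Set.mem_setOf_eq]
      have hsum : Sf.card = ∑ b : Fin 7, (Sf.filter (fun w => c w = b)).card :=
        Finset.card_eq_sum_card_fiberwise (fun y _ => Finset.mem_univ (c y))
      have heven : ∀ b : Fin 7, ¬ Odd (Sf.filter (fun w => c w = b)).card := by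
        intro b hb
        exact hcon b (by rwa [hfiber b, Set.ncard_coe_finset])
      have hev : Even (Sf.card) := by
        rw [hsum]
        apply Finset.even_sum
        intro b _
        exact Nat.not_odd_iff_even.mp (heven b)
      rw [hSf_card] at hev
      exact (Nat.not_odd_iff_even.mpr hev) (by decide)
    · -- u ≠ v
      by_cases hnon : (G'.neighborSet ⟨u, huv⟩).Nonempty
      · -- use the odd witness from the induced graph
        refine ⟨a ⟨u, huv⟩, ?_⟩
        have hodd := ha ⟨u, huv⟩ hnon
        have himg : Subtype.val '' {w | G'.Adj ⟨u, huv⟩ w ∧ c' w = a ⟨u, huv⟩}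
            = {w | G.Adj u w ∧ c w = a ⟨u, huv⟩} := by
          ext w
          constructor
          · rintro ⟨w', ⟨hadj, hcol⟩, rfl⟩
            exact ⟨hadj, by rw [hcne _ w'.2]; exact hcol⟩
          · rintro ⟨hadj, hcol⟩
            have hwv : w ≠ v := by
              rintro rfl
              rw [hcv] at hcol
              have huS : u ∈ Sf := (hmemSf u).mpr hadj.symm
              have hfu2 : f2 u = a ⟨u, huv⟩ := by simp [hf2, huv]
              exact hxf2 u huS (by rw [hfu2]; exact hcol)
            exact ⟨⟨w, hwv⟩, ⟨hadj, by rw [← hcne _ hwv]; exact hcol⟩, rfl⟩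
        rw [← himg, Set.ncard_image_of_injective _ Subtype.val_injective]
        exact hodd
      · -- u's only neighbor is v
        have hadjv : G.Adj u v := by
          obtain ⟨w, hw⟩ := hu
          by_cases hwv : w = v
          · exact hwv ▸ hw
          · exact absurd ⟨⟨w, hwv⟩, hw⟩ hnon
        refine ⟨x, ?_⟩
        have hset : {w | G.Adj u w ∧ c w = x} = {v} := by
          ext w
          simp only [Set.mem_setOf_eq, Set.mem_singleton_iff]
          constructor
          · rintro ⟨hadj, -⟩
            by_contra hwv
            exact hnon ⟨⟨w, hwv⟩, hadj⟩
          · rintro rfl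
            exact ⟨hadjv, hcv⟩
        rw [hset, Set.ncard_singleton]
        decide
end

section
/- Let G be a finite simple graph containing two adjacent vertices u and v that both have degree 2 in G. If the graph G − v obtained by deleting v has an odd 7-coloring, then G has an odd 7-coloring. -/
private lemma pick_color (a b c d : Fin 7) :
    ∃ e : Fin 7, e ≠ a ∧ e ≠ b ∧ e ≠ c ∧ e ≠ d := by
  revert a b c d; decide

private lemma transfer_set {V : Type*} (G : SimpleGraph V) (v w : V)
    (hw : w ∈ ({v}ᶜ : Set V))
    (c' : V → Fin 7) (c₀ : ({v}ᶜ : Set V) → Fin 7) (a : Fin 7)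
    (h1 : ∀ z, G.Adj w z → c' z = a → ∃ hz : z ∈ ({v}ᶜ : Set V), c₀ ⟨z, hz⟩ = a)
    (h2 : ∀ z : ({v}ᶜ : Set V), G.Adj w (z : V) → c₀ z = a → c' z = a) :
    {z | G.Adj w z ∧ c' z = a}
      = Subtype.val '' {z : ({v}ᶜ : Set V) |
          (G.induce ({v}ᶜ : Set V)).Adj ⟨w, hw⟩ z ∧ c₀ z = a} := by
  ext z
  simp only [Set.mem_setOf_eq, Set.mem_image]
  constructor
  · rintro ⟨hz1, hz2⟩
    obtain ⟨hz, hc⟩ := h1 z hz1 hz2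
    exact ⟨⟨z, hz⟩, ⟨by simpa using hz1, hc⟩, rfl⟩
  · rintro ⟨⟨z', hz'⟩, ⟨ha, hc⟩, rfl⟩
    have hadj : G.Adj w z' := by simpa using ha
    exact ⟨hadj, h2 ⟨z', hz'⟩ hadj hc⟩

private lemma transfer_ncard {V : Type*} (G : SimpleGraph V) (v w : V)
    (hw : w ∈ ({v}ᶜ : Set V))
    (c' : V → Fin 7) (c₀ : ({v}ᶜ : Set V) → Fin 7) (a : Fin 7)
    (h1 : ∀ z, G.Adj w z → c' z = a → ∃ hz : z ∈ ({v}ᶜ : Set V), c₀ ⟨z, hz⟩ = a)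
    (h2 : ∀ z : ({v}ᶜ : Set V), G.Adj w (z : V) → c₀ z = a → c' z = a) :
    {z | G.Adj w z ∧ c' z = a}.ncard
      = {z : ({v}ᶜ : Set V) |
          (G.induce ({v}ᶜ : Set V)).Adj ⟨w, hw⟩ z ∧ c₀ z = a}.ncard := by
  rw [transfer_set G v w hw c' c₀ a h1 h2,
    Set.ncard_image_of_injective _ Subtype.val_injective]

/-- Oddness condition at the vertex `y` (the other neighbor of `v`). -/
private lemma odd_at_y {V : Type*} [Fintype V] (G : SimpleGraph V) (v y u : V)
    (c₀ : ({v}ᶜ : Set V) → Fin 7) (c' : V → Fin 7) (cv : Fin 7)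
    (hym : y ∈ ({v}ᶜ : Set V)) (hvy : G.Adj v y)
    (hNvy : ∀ z, G.Adj y z → z = v ∨ (z ∈ ({v}ᶜ : Set V) ∧ z ≠ u))
    (hcv : c' v = cv)
    (hco : ∀ z (hz : z ∈ ({v}ᶜ : Set V)), z ≠ u → c' z = c₀ ⟨z, hz⟩)
    (hcase : (¬ ((G.induce ({v}ᶜ : Set V)).neighborSet ⟨y, hym⟩).Nonempty)
      ∨ ∃ a, Odd {z : ({v}ᶜ : Set V) |
          (G.induce ({v}ᶜ : Set V)).Adj ⟨y, hym⟩ z ∧ c₀ z = a}.ncard ∧ cv ≠ a) :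
    ∃ a, Odd {z | G.Adj y z ∧ c' z = a}.ncard := by
  rcases hcase with hempty | ⟨a, ha, hcva⟩
  · refine ⟨cv, ?_⟩
    have hset : {z | G.Adj y z ∧ c' z = cv} = {v} := by
      ext z
      simp only [Set.mem_setOf_eq, Set.mem_singleton_iff]
      constructor
      · rintro ⟨hz1, hz2⟩
        rcases hNvy z hz1 with rfl | ⟨hz, _⟩
        · rfl
        · exact absurd ⟨⟨z, hz⟩, by simpa using hz1⟩ hempty
      · rintro rfl
        exact ⟨hvy.symm, hcv⟩
    rw [hset, Set.ncard_singleton]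
    exact odd_one
  · refine ⟨a, ?_⟩
    rw [transfer_ncard G v y hym c' c₀ a ?_ ?_]
    · exact ha
    · intro z hz1 hz2
      rcases hNvy z hz1 with rfl | ⟨hz, hzu⟩
      · exact absurd (hcv.symm.trans hz2) hcva
      · exact ⟨hz, ((hco z hz hzu).symm.trans hz2)⟩
    · rintro ⟨z, hz⟩ hz1 hz2
      rcases hNvy z hz1 with rfl | ⟨hz', hzu⟩
      · exact absurd hz (by simp)
      · exact (hco z hz hzu).trans hz2

/-- Master verification lemma: the extended coloring is an odd coloring. -/
private lemma master {V : Type*} [Fintype V] (G : SimpleGraph V) (u v x y : V)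
    (hNu : G.neighborSet u = {v, x}) (hNv : G.neighborSet v = {u, y})
    (hxv : x ≠ v) (hxu : x ≠ u) (hyu : y ≠ u) (hyv : y ≠ v) (huv : u ≠ v)
    (hxm : x ∈ ({v}ᶜ : Set V)) (hym : y ∈ ({v}ᶜ : Set V))
    (c₀ : ({v}ᶜ : Set V) → Fin 7)
    (hc₀ : IsOddColoring (G.induce ({v}ᶜ : Set V)) c₀)
    (c' : V → Fin 7) (cu cv : Fin 7)
    (hcv : c' v = cv) (hcu : c' u = cu)
    (hco : ∀ z (hz : z ∈ ({v}ᶜ : Set V)), z ≠ u → c' z = c₀ ⟨z, hz⟩)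
    (hcuv : cu ≠ cv)
    (hcux : cu ≠ c₀ ⟨x, hxm⟩) (hcvy : cv ≠ c₀ ⟨y, hym⟩)
    (hcuy : cu ≠ c₀ ⟨y, hym⟩) (hcvx : cv ≠ c₀ ⟨x, hxm⟩)
    (Hx : ∃ a, Odd {z | G.Adj x z ∧ c' z = a}.ncard)
    (Hy : x ≠ y → ∃ a, Odd {z | G.Adj y z ∧ c' z = a}.ncard) :
    IsOddColoring G c' := by
  have hadj_uv : G.Adj u v := by
    have : v ∈ G.neighborSet u := by rw [hNu]; simp
    exact this
  have hadj_ux : G.Adj u x := by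
    have : x ∈ G.neighborSet u := by rw [hNu]; simp
    exact this
  have hadj_vy : G.Adj v y := by
    have : y ∈ G.neighborSet v := by rw [hNv]; simp
    exact this
  have hNu' : ∀ z, G.Adj u z → z = v ∨ z = x := by
    intro z hz
    have : z ∈ G.neighborSet u := hz
    rw [hNu] at this; simpa using this
  have hNv' : ∀ z, G.Adj v z → z = u ∨ z = y := by
    intro z hz
    have : z ∈ G.neighborSet v := hz
    rw [hNv] at this; simpa using this
  constructor
  · -- properness
    intro a b hab
    by_cases hav : a = v
    · rw [hav]
      rcases hNv' b (hav ▸ hab) with rfl | rfl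
      · rw [hcv, hcu]; exact fun h => hcuv h.symm
      · rw [hcv, hco b hym hyu]; exact hcvy
    by_cases hbv : b = v
    · rw [hbv]
      rcases hNv' a (hbv ▸ hab.symm) with rfl | rfl
      · rw [hcv, hcu]; exact hcuv
      · rw [hcv, hco a hym hyu]; exact fun h => hcvy h.symm
    by_cases hau : a = u
    · rw [hau]
      rcases hNu' b (hau ▸ hab) with rfl | rfl
      · exact absurd rfl hbv
      · rw [hcu, hco b hxm hxu]; exact hcux
    by_cases hbu : b = u
    · rw [hbu]
      rcases hNu' a (hbu ▸ hab.symm) with rfl | rfl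
      · exact absurd rfl hav
      · rw [hcu, hco a hxm hxu]; exact fun h => hcux h.symm
    · have ham : a ∈ ({v}ᶜ : Set V) := by simpa using hav
      have hbm : b ∈ ({v}ᶜ : Set V) := by simpa using hbv
      rw [hco a ham hau, hco b hbm hbu]
      exact hc₀.1 ⟨a, ham⟩ ⟨b, hbm⟩ (by simpa using hab)
  · -- oddness
    intro w _
    by_cases hwv : w = v
    · refine ⟨cu, ?_⟩
      rw [hwv]
      have hset : {z | G.Adj v z ∧ c' z = cu} = {u} := by
        ext z
        simp only [Set.mem_setOf_eq, Set.mem_singleton_iff]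
        constructor
        · rintro ⟨hz1, hz2⟩
          rcases hNv' z hz1 with hzu | hzy
          · exact hzu
          · exact absurd ((hco y hym hyu).symm.trans (hzy ▸ hz2)).symm hcuy
        · rintro rfl
          exact ⟨hadj_uv.symm, hcu⟩
      rw [hset, Set.ncard_singleton]; exact odd_one
    by_cases hwu : w = u
    · refine ⟨cv, ?_⟩
      rw [hwu]
      have hset : {z | G.Adj u z ∧ c' z = cv} = {v} := by
        ext z
        simp only [Set.mem_setOf_eq, Set.mem_singleton_iff]
        constructor
        · rintro ⟨hz1, hz2⟩
          rcases hNu' z hz1 with hzv | hzx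
          · exact hzv
          · exact absurd ((hco x hxm hxu).symm.trans (hzx ▸ hz2)).symm hcvx
        · rintro rfl
          exact ⟨hadj_uv, hcv⟩
      rw [hset, Set.ncard_singleton]; exact odd_one
    by_cases hwx : w = x
    · rw [hwx]; exact Hx
    by_cases hwy : w = y
    · rw [hwy]; exact Hy (fun h => hwx (hwy ▸ h.symm))
    · -- generic vertex
      have hwm : w ∈ ({v}ᶜ : Set V) := by simpa using hwv
      have hnwv : ¬ G.Adj w v := by
        intro hh
        rcases hNv' w hh.symm with rfl | rfl
        · exact hwu rfl
        · exact hwy rfl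
      have hnwu : ¬ G.Adj w u := by
        intro hh
        rcases hNu' w hh.symm with rfl | rfl
        · exact hwv rfl
        · exact hwx rfl
      rename_i hw
      obtain ⟨z0, hz0⟩ := hw
      have hz0v : z0 ≠ v := by rintro rfl; exact hnwv hz0
      have hne : ((G.induce ({v}ᶜ : Set V)).neighborSet ⟨w, hwm⟩).Nonempty :=
        ⟨⟨z0, by simpa using hz0v⟩, by simpa using hz0⟩
      obtain ⟨a, ha⟩ := hc₀.2 ⟨w, hwm⟩ hne
      refine ⟨a, ?_⟩
      rw [transfer_ncard G v w hwm c' c₀ a ?_ ?_]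
      · exact ha
      · intro z hz1 hz2
        have hzv : z ≠ v := by rintro rfl; exact hnwv hz1
        have hzu : z ≠ u := by rintro rfl; exact hnwu hz1
        exact ⟨by simpa using hzv, ((hco z (by simpa using hzv) hzu).symm.trans hz2)⟩
      · rintro ⟨z, hz⟩ hz1 hz2
        have hzu : z ≠ u := by rintro rfl; exact hnwu hz1
        exact (hco z hz hzu).trans hz2

/-- If `u` and `v` are adjacent vertices both of degree 2 in `G` and `G - v` has an
odd 7-coloring, then so does `G`. -/
theorem hasOddColoring_of_delete_adjacent_degree_two {V : Type*} [Fintype V]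
    (G : SimpleGraph V) (u v : V) (hadj : G.Adj u v)
    (hdu : (G.neighborSet u).ncard = 2) (hdv : (G.neighborSet v).ncard = 2)
    (h : HasOddColoring (G.induce ({v}ᶜ : Set V)) 7) :
    HasOddColoring G 7 := by
  classical
  obtain ⟨c₀, hc₀⟩ := h
  have huv : u ≠ v := hadj.ne
  -- find x with N(u) = {v, x}
  obtain ⟨a₁, b₁, hab₁, hN₁⟩ := Set.ncard_eq_two.mp hdu
  have hvmem : v ∈ G.neighborSet u := hadj
  rw [hN₁] at hvmem
  obtain ⟨x, hNu, hxv⟩ : ∃ x, G.neighborSet u = {v, x} ∧ x ≠ v := by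
    rcases hvmem with rfl | rfl
    · exact ⟨b₁, hN₁, fun h => hab₁ h.symm⟩
    · exact ⟨a₁, by rw [hN₁, Set.pair_comm], hab₁⟩
  -- find y with N(v) = {u, y}
  obtain ⟨a₂, b₂, hab₂, hN₂⟩ := Set.ncard_eq_two.mp hdv
  have humem : u ∈ G.neighborSet v := hadj.symm
  rw [hN₂] at humem
  obtain ⟨y, hNv, hyu⟩ : ∃ y, G.neighborSet v = {u, y} ∧ y ≠ u := by
    rcases humem with rfl | rfl
    · exact ⟨b₂, hN₂, fun h => hab₂ h.symm⟩
    · exact ⟨a₂, by rw [hN₂, Set.pair_comm], hab₂⟩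
  have hadj_ux : G.Adj u x := by
    have : x ∈ G.neighborSet u := by rw [hNu]; simp
    exact this
  have hadj_vy : G.Adj v y := by
    have : y ∈ G.neighborSet v := by rw [hNv]; simp
    exact this
  have hxu : x ≠ u := fun h => G.irrefl (h ▸ hadj_ux)
  have hyv : y ≠ v := fun h => G.irrefl (h ▸ hadj_vy)
  have hxm : x ∈ ({v}ᶜ : Set V) := by simpa using hxv
  have hym : y ∈ ({v}ᶜ : Set V) := by simpa using hyv
  have hum : u ∈ ({v}ᶜ : Set V) := by simpa using huv
  have hNu' : ∀ z, G.Adj u z → z = v ∨ z = x := by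
    intro z hz
    have : z ∈ G.neighborSet u := hz
    rw [hNu] at this; simpa using this
  have hNv' : ∀ z, G.Adj v z → z = u ∨ z = y := by
    intro z hz
    have : z ∈ G.neighborSet v := hz
    rw [hNv] at this; simpa using this
  -- properness of c₀ across u-x
  have hpux : c₀ ⟨u, hum⟩ ≠ c₀ ⟨x, hxm⟩ :=
    hc₀.1 ⟨u, hum⟩ ⟨x, hxm⟩ (by simpa using hadj_ux)
  -- odd color at x for c₀
  have hxne : ((G.induce ({v}ᶜ : Set V)).neighborSet ⟨x, hxm⟩).Nonempty :=
    ⟨⟨u, hum⟩, by simpa using hadj_ux.symm⟩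
  obtain ⟨ax, hax⟩ := hc₀.2 ⟨x, hxm⟩ hxne
  by_cases hxy : x = y
  · -- triangle case: x = y
    subst hxy
    obtain ⟨cv, p1, p2, p3, _⟩ := pick_color (c₀ ⟨u, hum⟩) (c₀ ⟨x, hxm⟩) ax ax
    set cu := c₀ ⟨u, hum⟩ with hcu_def
    refine ⟨fun z => if hz : z = v then cv else if z = u then cu
      else c₀ ⟨z, by simpa using hz⟩, ?_⟩
    set c' : V → Fin 7 := fun z => if hz : z = v then cv else if z = u then cu
      else c₀ ⟨z, by simpa using hz⟩ with hc'_def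
    have hcv : c' v = cv := by simp [hc'_def]
    have hcu : c' u = cu := by simp [hc'_def, huv]
    have hco : ∀ z (hz : z ∈ ({v}ᶜ : Set V)), z ≠ u → c' z = c₀ ⟨z, hz⟩ := by
      intro z hz hzu
      have hzv : z ≠ v := by simpa using hz
      simp [hc'_def, hzv, hzu]
    have hagree : ∀ z (hz : z ∈ ({v}ᶜ : Set V)), c' z = c₀ ⟨z, hz⟩ := by
      intro z hz
      by_cases hzu : z = u
      · subst hzu; exact hcu
      · exact hco z hz hzu
    refine master G u v x x hNu hNv hxv hxu hxu hxv huv hxm hxm c₀ hc₀ c' cu cv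
      hcv hcu hco (fun h => p1 h.symm) hpux p2 hpux p2 ?_ (fun h => absurd rfl h)
    refine ⟨ax, ?_⟩
    rw [transfer_ncard G v x hxm c' c₀ ax ?_ ?_]
    · exact hax
    · intro z hz1 hz2
      have hzv : z ≠ v := by
        rintro rfl
        exact p3 (hcv.symm.trans hz2)
      exact ⟨by simpa using hzv, ((hagree z (by simpa using hzv)).symm.trans hz2)⟩
    · rintro ⟨z, hz⟩ hz1 hz2
      exact (hagree z hz).trans hz2
  · -- x ≠ y
    have hnxv : ¬ G.Adj x v := by
      intro hh
      rcases hNv' x hh.symm with rfl | rfl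
      · exact hxu rfl
      · exact hxy rfl
    have hNvy : ∀ z, G.Adj y z → z = v ∨ (z ∈ ({v}ᶜ : Set V) ∧ z ≠ u) := by
      intro z hz
      by_cases hzv : z = v
      · exact Or.inl hzv
      · refine Or.inr ⟨by simpa using hzv, ?_⟩
        rintro rfl
        rcases hNu' y hz.symm with rfl | rfl
        · exact hyv rfl
        · exact hxy rfl
    -- odd color at y for c₀ (if y non-isolated in G - v)
    have hayex : ∃ ay : Fin 7,
        ((G.induce ({v}ᶜ : Set V)).neighborSet ⟨y, hym⟩).Nonempty →
        Odd {z : ({v}ᶜ : Set V) |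
          (G.induce ({v}ᶜ : Set V)).Adj ⟨y, hym⟩ z ∧ c₀ z = ay}.ncard := by
      by_cases hne : ((G.induce ({v}ᶜ : Set V)).neighborSet ⟨y, hym⟩).Nonempty
      · obtain ⟨a, ha⟩ := hc₀.2 ⟨y, hym⟩ hne
        exact ⟨a, fun _ => ha⟩
      · exact ⟨0, fun hh => absurd hh hne⟩
    obtain ⟨ay, hay⟩ := hayex
    by_cases heq : c₀ ⟨u, hum⟩ = c₀ ⟨y, hym⟩
    · -- must recolor u
      by_cases hex : ∃ a, Odd {z : ({v}ᶜ : Set V) |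
          (G.induce ({v}ᶜ : Set V)).Adj ⟨x, hxm⟩ z ∧ c₀ z = a}.ncard ∧ a ≠ c₀ ⟨u, hum⟩
      · -- B2a: x has an odd color different from c₀ u
        obtain ⟨a0, ha0, ha0ne⟩ := hex
        obtain ⟨cu, g1, g2, g3, _⟩ := pick_color (c₀ ⟨u, hum⟩) (c₀ ⟨x, hxm⟩) a0 a0
        obtain ⟨cv, k1, k2, k3, k4⟩ := pick_color cu (c₀ ⟨y, hym⟩) (c₀ ⟨x, hxm⟩) ay
        refine ⟨fun z => if hz : z = v then cv else if z = u then cu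
          else c₀ ⟨z, by simpa using hz⟩, ?_⟩
        set c' : V → Fin 7 := fun z => if hz : z = v then cv else if z = u then cu
          else c₀ ⟨z, by simpa using hz⟩ with hc'_def
        have hcv : c' v = cv := by simp [hc'_def]
        have hcu : c' u = cu := by simp [hc'_def, huv]
        have hco : ∀ z (hz : z ∈ ({v}ᶜ : Set V)), z ≠ u → c' z = c₀ ⟨z, hz⟩ := by
          intro z hz hzu
          have hzv : z ≠ v := by simpa using hz
          simp [hc'_def, hzv, hzu]
        refine master G u v x y hNu hNv hxv hxu hyu hyv huv hxm hym c₀ hc₀ c' cu cv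
          hcv hcu hco (fun hh => k1 hh.symm) g2 k2 (heq ▸ g1) k3 ?_ ?_
        · -- Hx
          refine ⟨a0, ?_⟩
          rw [transfer_ncard G v x hxm c' c₀ a0 ?_ ?_]
          · exact ha0
          · intro z hz1 hz2
            have hzv : z ≠ v := by rintro rfl; exact hnxv hz1
            have hzu : z ≠ u := by
              rintro rfl
              exact g3 (hcu.symm.trans hz2)
            exact ⟨by simpa using hzv, ((hco z (by simpa using hzv) hzu).symm.trans hz2)⟩
          · rintro ⟨z, hz⟩ hz1 hz2
            have hzu : z ≠ u := by
              rintro rfl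
              exact ha0ne hz2.symm
            exact (hco z hz hzu).trans hz2
        · -- Hy
          intro _
          refine odd_at_y G v y u c₀ c' cv hym hadj_vy hNvy hcv hco ?_
          by_cases hne : ((G.induce ({v}ᶜ : Set V)).neighborSet ⟨y, hym⟩).Nonempty
          · exact Or.inr ⟨ay, hay hne, k4⟩
          · exact Or.inl hne
      · -- B2b: every odd color at x equals c₀ u
        push_neg at hex
        obtain ⟨cu, g1, g2, _, _⟩ := pick_color (c₀ ⟨u, hum⟩) (c₀ ⟨x, hxm⟩)
          (c₀ ⟨x, hxm⟩) (c₀ ⟨x, hxm⟩)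
        obtain ⟨cv, k1, k2, k3, k4⟩ := pick_color cu (c₀ ⟨y, hym⟩) (c₀ ⟨x, hxm⟩) ay
        refine ⟨fun z => if hz : z = v then cv else if z = u then cu
          else c₀ ⟨z, by simpa using hz⟩, ?_⟩
        set c' : V → Fin 7 := fun z => if hz : z = v then cv else if z = u then cu
          else c₀ ⟨z, by simpa using hz⟩ with hc'_def
        have hcv : c' v = cv := by simp [hc'_def]
        have hcu : c' u = cu := by simp [hc'_def, huv]
        have hco : ∀ z (hz : z ∈ ({v}ᶜ : Set V)), z ≠ u → c' z = c₀ ⟨z, hz⟩ := by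
          intro z hz hzu
          have hzv : z ≠ v := by simpa using hz
          simp [hc'_def, hzv, hzu]
        refine master G u v x y hNu hNv hxv hxu hyu hyv huv hxm hym c₀ hc₀ c' cu cv
          hcv hcu hco (fun hh => k1 hh.symm) g2 k2 (heq ▸ g1) k3 ?_ ?_
        · -- Hx : use color cu; its count at x was even, and u now contributes
          have hTeven : Even {z : ({v}ᶜ : Set V) |
              (G.induce ({v}ᶜ : Set V)).Adj ⟨x, hxm⟩ z ∧ c₀ z = cu}.ncard := by
            rcases Nat.even_or_odd {z : ({v}ᶜ : Set V) |
              (G.induce ({v}ᶜ : Set V)).Adj ⟨x, hxm⟩ z ∧ c₀ z = cu}.ncard with he | ho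
            · exact he
            · exact absurd (hex cu ho) g1
          refine ⟨cu, ?_⟩
          have hset : {z | G.Adj x z ∧ c' z = cu}
              = insert u (Subtype.val '' {z : ({v}ᶜ : Set V) |
                  (G.induce ({v}ᶜ : Set V)).Adj ⟨x, hxm⟩ z ∧ c₀ z = cu}) := by
            ext z
            simp only [Set.mem_setOf_eq, Set.mem_insert_iff, Set.mem_image]
            constructor
            · rintro ⟨hz1, hz2⟩
              by_cases hzu : z = u
              · exact Or.inl hzu
              · have hzv : z ≠ v := by rintro rfl; exact hnxv hz1
                refine Or.inr ⟨⟨z, by simpa using hzv⟩,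
                  ⟨by simpa using hz1, ?_⟩, rfl⟩
                exact ((hco z (by simpa using hzv) hzu).symm.trans hz2)
            · rintro (rfl | ⟨⟨z', hz'⟩, ⟨hz1, hz2⟩, rfl⟩)
              · exact ⟨hadj_ux.symm, hcu⟩
              · have hadjxz : G.Adj x z' := by simpa using hz1
                have hzu : z' ≠ u := by
                  rintro rfl
                  exact g1 hz2.symm
                exact ⟨hadjxz, (hco z' hz' hzu).trans hz2⟩
          have hmem : u ∉ Subtype.val '' {z : ({v}ᶜ : Set V) |
              (G.induce ({v}ᶜ : Set V)).Adj ⟨x, hxm⟩ z ∧ c₀ z = cu} := by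
            rintro ⟨⟨z', hz'⟩, ⟨_, hz2⟩, rfl⟩
            exact g1 hz2.symm
          rw [hset, Set.ncard_insert_of_notMem hmem (Set.toFinite _),
            Set.ncard_image_of_injective _ Subtype.val_injective]
          exact hTeven.add_one
        · -- Hy
          intro _
          refine odd_at_y G v y u c₀ c' cv hym hadj_vy hNvy hcv hco ?_
          by_cases hne : ((G.induce ({v}ᶜ : Set V)).neighborSet ⟨y, hym⟩).Nonempty
          · exact Or.inr ⟨ay, hay hne, k4⟩
          · exact Or.inl hne
    · -- B1: no recoloring needed
      obtain ⟨cv, k1, k2, k3, k4⟩ := pick_color (c₀ ⟨u, hum⟩) (c₀ ⟨y, hym⟩)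
        (c₀ ⟨x, hxm⟩) ay
      set cu := c₀ ⟨u, hum⟩ with hcu_def
      refine ⟨fun z => if hz : z = v then cv else if z = u then cu
        else c₀ ⟨z, by simpa using hz⟩, ?_⟩
      set c' : V → Fin 7 := fun z => if hz : z = v then cv else if z = u then cu
        else c₀ ⟨z, by simpa using hz⟩ with hc'_def
      have hcv : c' v = cv := by simp [hc'_def]
      have hcu : c' u = cu := by simp [hc'_def, huv]
      have hco : ∀ z (hz : z ∈ ({v}ᶜ : Set V)), z ≠ u → c' z = c₀ ⟨z, hz⟩ := by
        intro z hz hzu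
        have hzv : z ≠ v := by simpa using hz
        simp [hc'_def, hzv, hzu]
      have hagree : ∀ z (hz : z ∈ ({v}ᶜ : Set V)), c' z = c₀ ⟨z, hz⟩ := by
        intro z hz
        by_cases hzu : z = u
        · subst hzu; exact hcu
        · exact hco z hz hzu
      refine master G u v x y hNu hNv hxv hxu hyu hyv huv hxm hym c₀ hc₀ c' cu cv
        hcv hcu hco (fun hh => k1 hh.symm) hpux k2 heq k3 ?_ ?_
      · -- Hx
        refine ⟨ax, ?_⟩
        rw [transfer_ncard G v x hxm c' c₀ ax ?_ ?_]
        · exact hax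
        · intro z hz1 hz2
          have hzv : z ≠ v := by rintro rfl; exact hnxv hz1
          exact ⟨by simpa using hzv, ((hagree z (by simpa using hzv)).symm.trans hz2)⟩
        · rintro ⟨z, hz⟩ hz1 hz2
          exact (hagree z hz).trans hz2
      · -- Hy
        intro _
        refine odd_at_y G v y u c₀ c' cv hym hadj_vy hNvy hcv hco ?_
        by_cases hne : ((G.induce ({v}ᶜ : Set V)).neighborSet ⟨y, hym⟩).Nonempty
        · exact Or.inr ⟨ay, hay hne, k4⟩
        · exact Or.inl hne
end

section
/- Let G be a finite simple graph with adjacent vertices u and v, both of odd degree in G, and let G′ be the graph obtained from G by subdividing the edge uv, i.e., by deleting the edge uv and adding a new vertex w adjacent exactly to u and to v. If G′ has an odd 7-coloring, then G has an odd 7-coloring. -/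
lemma odd_fiber' {V : Type*} [Fintype V] (S : Set V) (c : V → Fin 7)
    (hS : Odd S.ncard) : ∃ a, Odd {w | w ∈ S ∧ c w = a}.ncard := by
  classical
  by_contra hcon
  push_neg at hcon
  simp only [Nat.not_odd_iff_even] at hcon
  have h1 : S.ncard = ∑ a : Fin 7, {w | w ∈ S ∧ c w = a}.ncard := by
    rw [Set.ncard_eq_toFinset_card' S]
    rw [Finset.card_eq_sum_card_fiberwise (f := c) (t := Finset.univ)
      (fun x _ => Finset.mem_univ _)]
    refine Finset.sum_congr rfl fun a _ => ?_
    rw [Set.ncard_eq_toFinset_card']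
    congr 1
    ext w
    simp
  rw [h1] at hS
  exact (Nat.not_odd_iff_even.2 (Finset.even_sum _ fun a _ => hcon a)) hS



/-- Let `u` and `v` be adjacent vertices of odd degree in `G`, and let `G'` be
obtained from `G` by subdividing the edge `uv` with a new vertex (`none`).  If `G'`
has an odd 7-coloring, then so does `G`. -/
theorem hasOddColoring_of_subdivide {V : Type*} [Fintype V]
    (G : SimpleGraph V) (u v : V) (huv : G.Adj u v)
    (hu : Odd (G.neighborSet u).ncard) (hv : Odd (G.neighborSet v).ncard)
    (G' : SimpleGraph (Option V))
    (hsome : ∀ x y : V, G'.Adj (some x) (some y) ↔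
      G.Adj x y ∧ ¬(x = u ∧ y = v) ∧ ¬(x = v ∧ y = u))
    (hnew : ∀ x : V, G'.Adj none (some x) ↔ x = u ∨ x = v)
    (h : HasOddColoring G' 7) :
    HasOddColoring G 7 := by
  obtain ⟨c', hproper, hodd⟩ := h
  have huvne : u ≠ v := huv.ne
  -- the subdivision vertex forces c' u ≠ c' v
  have hcuv : c' (some u) ≠ c' (some v) := by
    intro heq
    obtain ⟨a, ha⟩ := hodd none ⟨some u, (hnew u).2 (Or.inl rfl)⟩
    have hset : {w | G'.Adj none w ∧ c' w = a} =
        if c' (some u) = a then {some u, some v} else ∅ := by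
      ext w
      cases w with
      | none => simp [G'.irrefl]
      | some x =>
        simp only [Set.mem_setOf_eq, hnew]
        split_ifs with hca
        · constructor
          · rintro ⟨hx | hx, _⟩ <;> simp [hx]
          · intro hy
            simp only [Set.mem_insert_iff, Set.mem_singleton_iff,
              Option.some.injEq] at hy
            rcases hy with rfl | rfl
            · exact ⟨Or.inl rfl, hca⟩
            · exact ⟨Or.inr rfl, heq ▸ hca⟩
        · simp only [Set.mem_empty_iff_false, iff_false]
          rintro ⟨hx | hx, hc⟩ <;> subst hx
          · exact hca hc
          · exact hca (heq ▸ hc)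
    rw [hset] at ha
    split_ifs at ha with hca
    · rw [Set.ncard_pair (by simpa using huvne)] at ha
      exact (Nat.not_even_iff_odd.mpr ha) even_two
    · simp [Set.ncard_empty] at ha
  refine ⟨fun x => c' (some x), ?_, ?_⟩
  · -- proper
    intro x y hxy
    by_cases hc1 : x = u ∧ y = v
    · obtain ⟨rfl, rfl⟩ := hc1; exact hcuv
    by_cases hc2 : x = v ∧ y = u
    · obtain ⟨rfl, rfl⟩ := hc2; exact fun hh => hcuv hh.symm
    · exact hproper _ _ ((hsome x y).2 ⟨hxy, hc1, hc2⟩)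
  · -- odd condition
    intro x hne
    by_cases hx : x = u ∨ x = v
    · -- odd degree: automatic
      have hdeg : Odd (G.neighborSet x).ncard := by
        rcases hx with rfl | rfl
        · exact hu
        · exact hv
      obtain ⟨a, ha⟩ := odd_fiber' (G.neighborSet x) (fun w => c' (some w)) hdeg
      exact ⟨a, by convert ha using 2; rfl⟩
    · push_neg at hx
      obtain ⟨hxu, hxv⟩ := hx
      obtain ⟨y, hy⟩ := hne
      have hadj' : G'.Adj (some x) (some y) :=
        (hsome x y).2 ⟨hy, fun hh => hxu hh.1, fun hh => hxv hh.1⟩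
      obtain ⟨a, ha⟩ := hodd (some x) ⟨some y, hadj'⟩
      refine ⟨a, ?_⟩
      have himg : {w | G'.Adj (some x) w ∧ c' w = a} =
          some '' {w | G.Adj x w ∧ c' (some w) = a} := by
        ext w
        cases w with
        | none =>
          simp only [Set.mem_setOf_eq, Set.mem_image]
          constructor
          · rintro ⟨hadj, -⟩
            rcases (hnew x).1 hadj.symm with rfl | rfl
            · exact absurd rfl hxu
            · exact absurd rfl hxv
          · rintro ⟨z, -, hz⟩; exact absurd hz (by simp)
        | some z =>
          simp only [Set.mem_setOf_eq, Set.mem_image, hsome]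
          constructor
          · rintro ⟨⟨hadj, -, -⟩, hc⟩
            exact ⟨z, ⟨hadj, hc⟩, rfl⟩
          · rintro ⟨z', ⟨hadj, hc⟩, hz⟩
            obtain rfl : z' = z := by simpa using hz
            exact ⟨⟨hadj, fun hh => hxu hh.1, fun hh => hxv hh.1⟩, hc⟩
      rw [himg, Set.ncard_image_of_injective _ (Option.some_injective V)] at ha
      exact ha
end

section
/- Let G be a finite simple graph, let v be a vertex of degree 2 in G with two distinct neighbors u₁ and u₂, and suppose G − v has an odd 7-coloring c with c(u₁) ≠ c(u₂). Then G has an odd 7-coloring. -/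
/-- If `v` has degree 2 with distinct neighbors `u₁` and `u₂`, and `G - v` has an
odd 7-coloring giving `u₁` and `u₂` different colors, then `G` has an odd
7-coloring. -/
theorem hasOddColoring_of_delete_degree_two {V : Type*} [Fintype V]
    (G : SimpleGraph V) (v u₁ u₂ : V) (hne : u₁ ≠ u₂)
    (hN : G.neighborSet v = {u₁, u₂})
    (h : ∃ c : ({v}ᶜ : Set V) → Fin 7,
      IsOddColoring (G.induce ({v}ᶜ : Set V)) c ∧
      ∀ w₁ w₂ : ({v}ᶜ : Set V), (w₁ : V) = u₁ → (w₂ : V) = u₂ → c w₁ ≠ c w₂) :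
    HasOddColoring G 7 := by
  classical
  set S : Set V := ({v}ᶜ : Set V) with hS
  obtain ⟨c, ⟨hprop, hodd⟩, hdiff⟩ := h
  have hvu₁ : G.Adj v u₁ := by
    have : u₁ ∈ G.neighborSet v := by rw [hN]; simp
    exact this
  have hvu₂ : G.Adj v u₂ := by
    have : u₂ ∈ G.neighborSet v := by rw [hN]; simp
    exact this
  have hu₁v : u₁ ≠ v := fun h => G.irrefl (h ▸ hvu₁)
  have hu₂v : u₂ ≠ v := fun h => G.irrefl (h ▸ hvu₂)
  have hadjv : ∀ w, G.Adj v w ↔ w = u₁ ∨ w = u₂ := by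
    intro w
    constructor
    · intro hw
      have : w ∈ G.neighborSet v := hw
      rw [hN] at this
      simpa using this
    · rintro (rfl | rfl) <;> assumption
  have hu₁S : u₁ ∈ S := by simp [hS, hu₁v]
  have hu₂S : u₂ ∈ S := by simp [hS, hu₂v]
  set u₁' : S := ⟨u₁, hu₁S⟩ with hu₁'
  set u₂' : S := ⟨u₂, hu₂S⟩ with hu₂'
  have hcdiff : c u₁' ≠ c u₂' := hdiff u₁' u₂' rfl rfl
  -- odd colors for u₁' and u₂' (if non-isolated in induced graph)
  have ha₁ : ∃ a, ((G.induce S).neighborSet u₁').Nonempty →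
      Odd {w | (G.induce S).Adj u₁' w ∧ c w = a}.ncard := by
    by_cases hne1 : ((G.induce S).neighborSet u₁').Nonempty
    · obtain ⟨a, ha⟩ := hodd u₁' hne1; exact ⟨a, fun _ => ha⟩
    · exact ⟨c u₂', fun hh => absurd hh hne1⟩
  obtain ⟨a₁, ha₁⟩ := ha₁
  have ha₂ : ∃ a, ((G.induce S).neighborSet u₂').Nonempty →
      Odd {w | (G.induce S).Adj u₂' w ∧ c w = a}.ncard := by
    by_cases hne2 : ((G.induce S).neighborSet u₂').Nonempty
    · obtain ⟨a, ha⟩ := hodd u₂' hne2; exact ⟨a, fun _ => ha⟩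
    · exact ⟨c u₁', fun hh => absurd hh hne2⟩
  obtain ⟨a₂, ha₂⟩ := ha₂
  -- choose a new color b avoiding four values
  obtain ⟨b, hb⟩ : ∃ b : Fin 7, b ∉ ({c u₁', c u₂', a₁, a₂} : Finset (Fin 7)) := by
    by_contra hfull
    push_neg at hfull
    have h7 : (Finset.univ : Finset (Fin 7)).card ≤
        ({c u₁', c u₂', a₁, a₂} : Finset (Fin 7)).card :=
      Finset.card_le_card (fun x _ => hfull x)
    have h4 : ({c u₁', c u₂', a₁, a₂} : Finset (Fin 7)).card ≤ 4 := by
      apply le_trans (Finset.card_insert_le _ _)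
      have h1 := Finset.card_insert_le (c u₂') ({a₁, a₂} : Finset (Fin 7))
      have h2 := Finset.card_insert_le a₁ ({a₂} : Finset (Fin 7))
      simp only [Finset.card_singleton] at h1 h2 ⊢
      omega
    simp only [Finset.card_univ, Fintype.card_fin] at h7
    omega
  simp only [Finset.mem_insert, Finset.mem_singleton, not_or] at hb
  obtain ⟨hb1, hb2, hb3, hb4⟩ := hb
  -- the extended coloring
  set c' : V → Fin 7 := fun x => if hx : x ∈ S then c ⟨x, hx⟩ else b with hc'
  have hc'v : c' v = b := by simp [hc', hS]
  have hc'x : ∀ x : S, c' ↑x = c x := by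
    intro x
    simp only [hc', dif_pos x.2]
  -- key counting lemma
  have key : ∀ (w : S) (a : Fin 7), ¬ (G.Adj (↑w) v ∧ b = a) →
      {x | G.Adj (↑w : V) x ∧ c' x = a}.ncard
        = {x : S | (G.induce S).Adj w x ∧ c x = a}.ncard := by
    intro w a hcond
    rw [← Set.ncard_image_of_injective _ (Subtype.val_injective
      (p := fun x => x ∈ S))]
    congr 1
    ext x
    simp only [Set.mem_image, Set.mem_setOf_eq, SimpleGraph.comap_adj,
      Function.Embedding.coe_subtype]
    constructor
    · rintro ⟨hadj, hcx⟩
      have hxv : x ≠ v := by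
        rintro rfl
        exact hcond ⟨hadj, by rw [← hc'v, hcx]⟩
      have hxS : x ∈ S := by simp [hS, hxv]
      refine ⟨⟨x, hxS⟩, ⟨hadj, ?_⟩, rfl⟩
      rw [← hcx]; exact (hc'x ⟨x, hxS⟩).symm
    · rintro ⟨y, ⟨hadj, hcy⟩, rfl⟩
      exact ⟨hadj, by rw [hc'x y, hcy]⟩
  refine ⟨c', ?_, ?_⟩
  · -- properness
    intro x y hadj hcxy
    by_cases hx : x = v
    · subst hx
      rcases (hadjv y).mp hadj with rfl | rfl
      · rw [hc'v, hc'x u₁'] at hcxy; exact hb1 hcxy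
      · rw [hc'v, hc'x u₂'] at hcxy; exact hb2 hcxy
    · by_cases hy : y = v
      · subst hy
        rcases (hadjv x).mp hadj.symm with rfl | rfl
        · rw [hc'v, hc'x u₁'] at hcxy; exact hb1 hcxy.symm
        · rw [hc'v, hc'x u₂'] at hcxy; exact hb2 hcxy.symm
      · have hxS : x ∈ S := by simp [hS, hx]
        have hyS : y ∈ S := by simp [hS, hy]
        have hadj' : (G.induce S).Adj ⟨x, hxS⟩ ⟨y, hyS⟩ := hadj
        exact hprop _ _ hadj' (by rwa [hc'x ⟨x, hxS⟩, hc'x ⟨y, hyS⟩] at hcxy)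
  · -- odd condition
    intro w hw
    by_cases hwv : w = v
    · refine ⟨c u₁', ?_⟩
      have hset : {x | G.Adj w x ∧ c' x = c u₁'} = {u₁} := by
        rw [hwv]
        ext x
        simp only [Set.mem_setOf_eq, Set.mem_singleton_iff]
        constructor
        · rintro ⟨hadj, hcx⟩
          rcases (hadjv x).mp hadj with rfl | rfl
          · rfl
          · rw [hc'x u₂'] at hcx; exact absurd hcx.symm hcdiff
        · rintro rfl
          exact ⟨hvu₁, hc'x u₁'⟩
      rw [hset, Set.ncard_singleton]
      exact odd_one
    · have hwS : w ∈ S := by simp [hS, hwv]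
      set w' : S := ⟨w, hwS⟩ with hw'def
      by_cases hwadj : G.Adj w v
      · rcases (hadjv w).mp hwadj.symm with h1 | h1
        · -- w = u₁
          have hw'eq : w' = u₁' := Subtype.ext h1
          by_cases hne1 : ((G.induce S).neighborSet u₁').Nonempty
          · refine ⟨a₁, ?_⟩
            have hk := key w' a₁ (fun hc => hb3 hc.2)
            rw [hw'eq] at hk
            rw [h1]
            rw [show {x | G.Adj u₁ x ∧ c' x = a₁}
              = {x | G.Adj (↑u₁' : V) x ∧ c' x = a₁} from rfl, hk]
            exact ha₁ hne1
          · refine ⟨b, ?_⟩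
            have hset : {x | G.Adj w x ∧ c' x = b} = {v} := by
              ext x
              simp only [Set.mem_setOf_eq, Set.mem_singleton_iff]
              constructor
              · rintro ⟨hadj, hcx⟩
                by_contra hxv
                have hxS : x ∈ S := by simp [hS, hxv]
                have : (G.induce S).Adj u₁' ⟨x, hxS⟩ := by
                  show G.Adj u₁ x
                  rw [← h1]; exact hadj
                exact hne1 ⟨⟨x, hxS⟩, this⟩
              · rintro rfl
                exact ⟨hwadj, hc'v⟩
            rw [hset, Set.ncard_singleton]
            exact odd_one
        · -- w = u₂
          have hw'eq : w' = u₂' := Subtype.ext h1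
          by_cases hne2 : ((G.induce S).neighborSet u₂').Nonempty
          · refine ⟨a₂, ?_⟩
            have hk := key w' a₂ (fun hc => hb4 hc.2)
            rw [hw'eq] at hk
            rw [h1]
            rw [show {x | G.Adj u₂ x ∧ c' x = a₂}
              = {x | G.Adj (↑u₂' : V) x ∧ c' x = a₂} from rfl, hk]
            exact ha₂ hne2
          · refine ⟨b, ?_⟩
            have hset : {x | G.Adj w x ∧ c' x = b} = {v} := by
              ext x
              simp only [Set.mem_setOf_eq, Set.mem_singleton_iff]
              constructor
              · rintro ⟨hadj, hcx⟩
                by_contra hxv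
                have hxS : x ∈ S := by simp [hS, hxv]
                have : (G.induce S).Adj u₂' ⟨x, hxS⟩ := by
                  show G.Adj u₂ x
                  rw [← h1]; exact hadj
                exact hne2 ⟨⟨x, hxS⟩, this⟩
              · rintro rfl
                exact ⟨hwadj, hc'v⟩
            rw [hset, Set.ncard_singleton]
            exact odd_one
      · -- w not adjacent to v: neighborhood unchanged
        obtain ⟨x, hx⟩ := hw
        have hxv : x ≠ v := fun hh => hwadj (hh ▸ hx)
        have hxS : x ∈ S := by simp [hS, hxv]
        have hne' : ((G.induce S).neighborSet w').Nonempty := ⟨⟨x, hxS⟩, hx⟩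
        obtain ⟨a, ha⟩ := hodd w' hne'
        refine ⟨a, ?_⟩
        rw [key w' a (fun hc => hwadj hc.1)]
        exact ha
end

section
/- Let G be a finite simple graph containing distinct vertices v₁, v₂, v₃, v₄ such that v₁ and v₃ both have degree 2 and both have exactly {v₂, v₄} as their set of neighbors (so v₁v₂v₃v₄ is a 4-cycle whose vertices v₁ and v₃ have degree 2 in G). If the graph G − v₁ obtained by deleting v₁ has an odd 7-coloring, then G has an odd 7-coloring. -/
/-- Suppose `v₁ v₂ v₃ v₄` is a 4-cycle in `G` where `v₁` and `v₃` have degree 2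
(their neighborhoods are exactly `{v₂, v₄}`).  If `G - v₁` has an odd 7-coloring,
then so does `G`. -/
theorem hasOddColoring_of_delete_four_cycle_vertex {V : Type*} [Fintype V]
    (G : SimpleGraph V) (v₁ v₂ v₃ v₄ : V)
    (h12 : v₁ ≠ v₂) (h13 : v₁ ≠ v₃) (h14 : v₁ ≠ v₄)
    (h23 : v₂ ≠ v₃) (h24 : v₂ ≠ v₄) (h34 : v₃ ≠ v₄)
    (hN1 : G.neighborSet v₁ = {v₂, v₄}) (hN3 : G.neighborSet v₃ = {v₂, v₄})
    (h : HasOddColoring (G.induce ({v₁}ᶜ : Set V)) 7) :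
    HasOddColoring G 7 := by
  classical
  obtain ⟨c', hprop, hodd⟩ := h
  have hv2S : v₂ ∈ ({v₁}ᶜ : Set V) := by
    simp only [Set.mem_compl_iff, Set.mem_singleton_iff]; exact h12.symm
  have hv3S : v₃ ∈ ({v₁}ᶜ : Set V) := by
    simp only [Set.mem_compl_iff, Set.mem_singleton_iff]; exact h13.symm
  have hv4S : v₄ ∈ ({v₁}ᶜ : Set V) := by
    simp only [Set.mem_compl_iff, Set.mem_singleton_iff]; exact h14.symm
  set V₂ : ({v₁}ᶜ : Set V) := ⟨v₂, hv2S⟩ with hV₂def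
  set V₃ : ({v₁}ᶜ : Set V) := ⟨v₃, hv3S⟩ with hV₃def
  set V₄ : ({v₁}ᶜ : Set V) := ⟨v₄, hv4S⟩ with hV₄def
  have hadj1 : ∀ w, G.Adj v₁ w ↔ (w = v₂ ∨ w = v₄) := by
    intro w
    rw [← SimpleGraph.mem_neighborSet, hN1]
    simp
  have hadj3 : ∀ w, G.Adj v₃ w ↔ (w = v₂ ∨ w = v₄) := by
    intro w
    rw [← SimpleGraph.mem_neighborSet, hN3]
    simp
  have adj32 : G.Adj v₃ v₂ := (hadj3 v₂).mpr (Or.inl rfl)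
  have adj34 : G.Adj v₃ v₄ := (hadj3 v₄).mpr (Or.inr rfl)
  have hV24 : V₂ ≠ V₄ := fun hh => h24 (congrArg Subtype.val hh)
  have hadjI3 : ∀ w : ({v₁}ᶜ : Set V),
      (G.induce ({v₁}ᶜ : Set V)).Adj V₃ w ↔ (w = V₂ ∨ w = V₄) := by
    intro w
    have h1 : (G.induce ({v₁}ᶜ : Set V)).Adj V₃ w ↔ G.Adj v₃ w.1 := Iff.rfl
    rw [h1, hadj3]
    constructor
    · rintro (hh | hh)
      · exact Or.inl (Subtype.ext hh)
      · exact Or.inr (Subtype.ext hh)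
    · rintro (rfl | rfl)
      · exact Or.inl rfl
      · exact Or.inr rfl
  -- the odd condition at v₃ forces c' V₂ ≠ c' V₄
  have hne24 : c' V₂ ≠ c' V₄ := by
    intro heq
    obtain ⟨a₃, ha₃⟩ := hodd V₃ ⟨V₂, adj32⟩
    by_cases hc : c' V₂ = a₃
    · have hset : {w | (G.induce ({v₁}ᶜ : Set V)).Adj V₃ w ∧ c' w = a₃} = {V₂, V₄} := by
        ext w
        simp only [Set.mem_setOf_eq, hadjI3 w, Set.mem_insert_iff, Set.mem_singleton_iff]
        constructor
        · rintro ⟨hh, -⟩; exact hh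
        · rintro (rfl | rfl)
          · exact ⟨Or.inl rfl, hc⟩
          · exact ⟨Or.inr rfl, heq ▸ hc⟩
      rw [hset, Set.ncard_pair hV24] at ha₃
      exact (by decide : ¬ Odd 2) ha₃
    · have hset : {w | (G.induce ({v₁}ᶜ : Set V)).Adj V₃ w ∧ c' w = a₃} = ∅ := by
        ext w
        simp only [Set.mem_setOf_eq, hadjI3 w, Set.mem_empty_iff_false, iff_false, not_and]
        rintro (rfl | rfl) hcw
        · exact hc hcw
        · exact hc (heq ▸ hcw)
      rw [hset, Set.ncard_empty] at ha₃
      exact (by decide : ¬ Odd 0) ha₃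
  -- odd colors of v₂ and v₄ in the deleted graph
  obtain ⟨a₂, ha₂⟩ := hodd V₂ ⟨V₃, adj32.symm⟩
  obtain ⟨a₄, ha₄⟩ := hodd V₄ ⟨V₃, adj34.symm⟩
  -- choose a color b for v₁ avoiding c' V₂, c' V₄, a₂, a₄
  obtain ⟨b, hb⟩ : ∃ b : Fin 7, b ∉ ({c' V₂, c' V₄, a₂, a₄} : Finset (Fin 7)) := by
    by_contra hcon
    push_neg at hcon
    have hsub : (Finset.univ : Finset (Fin 7)) ⊆ {c' V₂, c' V₄, a₂, a₄} := fun x _ => hcon x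
    have h7 := Finset.card_le_card hsub
    have h4 : ({c' V₂, c' V₄, a₂, a₄} : Finset (Fin 7)).card ≤ 4 := by
      apply (Finset.card_insert_le _ _).trans
      apply Nat.succ_le_succ
      apply (Finset.card_insert_le _ _).trans
      apply Nat.succ_le_succ
      apply (Finset.card_insert_le _ _).trans
      apply Nat.succ_le_succ
      simp
    rw [Finset.card_univ, Fintype.card_fin] at h7
    omega
  simp only [Finset.mem_insert, Finset.mem_singleton, not_or] at hb
  obtain ⟨hb2, hb4, hba2, hba4⟩ := hb
  -- the extended coloring
  set c : V → Fin 7 := fun v => if hv : v = v₁ then b else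
    c' ⟨v, by simp only [Set.mem_compl_iff, Set.mem_singleton_iff]; exact hv⟩ with hcdef
  have hc1 : c v₁ = b := by simp [hcdef]
  have hcS : ∀ (w : V) (hw : w ∈ ({v₁}ᶜ : Set V)), c w = c' ⟨w, hw⟩ := by
    intro w hw
    have hw' : w ≠ v₁ := by simpa using hw
    simp [hcdef, hw']
  refine ⟨c, ?_, ?_⟩
  · -- properness
    intro u v huv
    by_cases hu : u = v₁
    · have hvv : v = v₂ ∨ v = v₄ := (hadj1 v).mp (hu ▸ huv)
      have hvS : v ∈ ({v₁}ᶜ : Set V) := by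
        rcases hvv with rfl | rfl
        · exact hv2S
        · exact hv4S
      rw [hu, hc1, hcS v hvS]
      rcases hvv with rfl | rfl
      · exact hb2
      · exact hb4
    · by_cases hv : v = v₁
      · have huu : u = v₂ ∨ u = v₄ := (hadj1 u).mp (hv ▸ huv).symm
        have huS : u ∈ ({v₁}ᶜ : Set V) := by
          rcases huu with rfl | rfl
          · exact hv2S
          · exact hv4S
        rw [hv, hc1, hcS u huS]
        rcases huu with rfl | rfl
        · exact fun hh => hb2 hh.symm
        · exact fun hh => hb4 hh.symm
      · have huS : u ∈ ({v₁}ᶜ : Set V) := by simpa using hu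
        have hvS : v ∈ ({v₁}ᶜ : Set V) := by simpa using hv
        rw [hcS u huS, hcS v hvS]
        exact hprop ⟨u, huS⟩ ⟨v, hvS⟩ huv
  · -- oddness
    intro v hv
    by_cases hv1 : v = v₁
    · rw [hv1]
      refine ⟨c v₂, ?_⟩
      have hset : {w | G.Adj v₁ w ∧ c w = c v₂} = {v₂} := by
        ext w
        simp only [Set.mem_setOf_eq, Set.mem_singleton_iff, hadj1 w]
        constructor
        · rintro ⟨hw | hw, hcw⟩
          · exact hw
          · exfalso
            rw [hw, hcS v₄ hv4S, hcS v₂ hv2S] at hcw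
            exact hne24 hcw.symm
        · rintro rfl
          exact ⟨Or.inl rfl, rfl⟩
      rw [hset, Set.ncard_singleton]
      exact odd_one
    · have hvS : v ∈ ({v₁}ᶜ : Set V) := by simpa using hv1
      obtain ⟨u, hu⟩ := hv
      have hne' : ∃ u : V, ∃ huS : u ∈ ({v₁}ᶜ : Set V), G.Adj v u := by
        by_cases hu1 : u = v₁
        · have hvv : v = v₂ ∨ v = v₄ := (hadj1 v).mp (hu1 ▸ hu).symm
          refine ⟨v₃, hv3S, ?_⟩
          rcases hvv with rfl | rfl
          · exact adj32.symm
          · exact adj34.symm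
        · exact ⟨u, by simpa using hu1, hu⟩
      obtain ⟨u, huS, huv⟩ := hne'
      have key : ∃ a : Fin 7,
          Odd {w : ({v₁}ᶜ : Set V) | (G.induce ({v₁}ᶜ : Set V)).Adj ⟨v, hvS⟩ w ∧ c' w = a}.ncard
          ∧ (G.Adj v v₁ → a ≠ b) := by
        by_cases hv2 : v = v₂
        · subst hv2
          exact ⟨a₂, ha₂, fun _ hh => hba2 hh.symm⟩
        · by_cases hv4 : v = v₄
          · subst hv4
            exact ⟨a₄, ha₄, fun _ hh => hba4 hh.symm⟩
          · have hnadj : ¬ G.Adj v v₁ := by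
              intro hh
              rcases (hadj1 v).mp hh.symm with rfl | rfl
              · exact hv2 rfl
              · exact hv4 rfl
            obtain ⟨a, ha⟩ := hodd ⟨v, hvS⟩ ⟨⟨u, huS⟩, huv⟩
            exact ⟨a, ha, fun hh => absurd hh hnadj⟩
      obtain ⟨a, haodd, hab⟩ := key
      refine ⟨a, ?_⟩
      have heq : {w | G.Adj v w ∧ c w = a} =
          Subtype.val '' {w : ({v₁}ᶜ : Set V) |
            (G.induce ({v₁}ᶜ : Set V)).Adj ⟨v, hvS⟩ w ∧ c' w = a} := by
        ext w
        simp only [Set.mem_setOf_eq, Set.mem_image]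
        constructor
        · rintro ⟨hadj, hcw⟩
          have hw1 : w ≠ v₁ := by
            rintro rfl
            rw [hc1] at hcw
            exact hab hadj hcw.symm
          have hwS : w ∈ ({v₁}ᶜ : Set V) := by simpa using hw1
          refine ⟨⟨w, hwS⟩, ⟨hadj, ?_⟩, rfl⟩
          rw [← hcS w hwS]
          exact hcw
        · rintro ⟨⟨w', hw'S⟩, ⟨hadj, hcw⟩, rfl⟩
          exact ⟨hadj, by rw [hcS w' hw'S]; exact hcw⟩
      rw [heq, Set.ncard_image_of_injective _ Subtype.val_injective]
      exact haodd
end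

section
/- Let G be a finite simple graph and let v be a vertex of degree 5 in G such that at least 4 of the neighbors of v have odd degree in G. If the graph G − v obtained by deleting v has an odd 7-coloring, then G has an odd 7-coloring. -/
/-- Parity: a vertex of odd degree always has a color appearing an odd
number of times in its neighborhood. -/
private lemma exists_odd_fiber {V : Type*} [Fintype V] (G : SimpleGraph V) (c : V → Fin 7)
    (u : V) (h : Odd (G.neighborSet u).ncard) :
    ∃ a : Fin 7, Odd {w | G.Adj u w ∧ c w = a}.ncard := by
  classical
  by_contra hcon
  push_neg at hcon
  set N : Finset V := (Set.toFinite (G.neighborSet u)).toFinset with hNdef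
  have hN : (G.neighborSet u).ncard = N.card := Set.ncard_eq_toFinset_card _ _
  have key : N.card = ∑ a : Fin 7, (N.filter (fun w => c w = a)).card :=
    Finset.card_eq_sum_card_fiberwise (fun x _ => Finset.mem_univ (c x))
  have hfib : ∀ a : Fin 7, ¬ Odd ((N.filter (fun w => c w = a)).card) := by
    intro a
    have hset : {w | G.Adj u w ∧ c w = a} = ↑(N.filter (fun w => c w = a)) := by
      ext x
      simp [hNdef, Set.Finite.mem_toFinset, SimpleGraph.mem_neighborSet]
    have := hcon a
    rwa [hset, Set.ncard_coe_finset] at this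
  have heven : Even N.card := by
    rw [key, Finset.even_sum_iff_even_card_odd]
    have : (Finset.univ.filter fun a : Fin 7 => Odd ((N.filter (fun w => c w = a)).card))
        = ∅ := by
      ext a; simp only [Finset.mem_filter, Finset.mem_univ, true_and, Finset.notMem_empty,
        iff_false]
      exact hfib a
    rw [this]; exact Even.zero
  rw [hN] at h
  exact (Nat.not_even_iff_odd.mpr h) heven

/-- Transfer of color-fibers between `G` and `G - v`. -/
private lemma ncard_fiber_transfer {V : Type*} [Fintype V] (G : SimpleGraph V) (v : V)
    (c₀ : ({v}ᶜ : Set V) → Fin 7) (c : V → Fin 7)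
    (hc : ∀ w (hw : w ∈ ({v}ᶜ : Set V)), c w = c₀ ⟨w, hw⟩)
    (u : V) (hu : u ∈ ({v}ᶜ : Set V)) (a : Fin 7) (hva : ¬(G.Adj u v ∧ c v = a)) :
    {w | G.Adj u w ∧ c w = a}.ncard =
      {w : ({v}ᶜ : Set V) | (G.induce ({v}ᶜ : Set V)).Adj ⟨u, hu⟩ w ∧ c₀ w = a}.ncard := by
  rw [← Set.ncard_image_of_injective _ (Subtype.val_injective
    (p := fun x => x ∈ ({v}ᶜ : Set V)))]
  congr 1
  ext x
  simp only [Set.mem_setOf_eq, Set.mem_image]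
  constructor
  · rintro ⟨hadj, hcx⟩
    have hx : x ∈ ({v}ᶜ : Set V) := by
      simp only [Set.mem_compl_iff, Set.mem_singleton_iff]
      rintro rfl; exact hva ⟨hadj, hcx⟩
    exact ⟨⟨x, hx⟩, ⟨hadj, by rw [← hc x hx]; exact hcx⟩, rfl⟩
  · rintro ⟨⟨y, hy⟩, ⟨hadj, hcy⟩, rfl⟩
    exact ⟨hadj, by rw [hc y hy]; exact hcy⟩

/-- If `v` has degree 5 and at least 4 of its neighbors have odd degree, and
`G - v` has an odd 7-coloring, then so does `G`. -/
theorem hasOddColoring_of_delete_degree_five {V : Type*} [Fintype V]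
    (G : SimpleGraph V) (v : V) (hdeg : (G.neighborSet v).ncard = 5)
    (hodd : 4 ≤ {w | G.Adj v w ∧ Odd (G.neighborSet w).ncard}.ncard)
    (h : HasOddColoring (G.induce ({v}ᶜ : Set V)) 7) :
    HasOddColoring G 7 := by
  classical
  set S : Set V := ({v}ᶜ : Set V) with hSdef
  obtain ⟨c₀, hc₀prop, hc₀odd⟩ := h
  -- the neighbors of v as a finset
  set N : Finset V := (Set.toFinite (G.neighborSet v)).toFinset with hNdef
  have hmemN : ∀ w, w ∈ N ↔ G.Adj v w := by
    intro w; simp [hNdef, Set.Finite.mem_toFinset, SimpleGraph.mem_neighborSet]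
  have hNcard : N.card = 5 := by
    rw [← Set.ncard_eq_toFinset_card _ (Set.toFinite _)]; exact hdeg
  -- the even-degree neighbors of v: at most one
  set E : Finset V := N.filter (fun u => ¬ Odd (G.neighborSet u).ncard) with hEdef
  have hEcard : E.card ≤ 1 := by
    have hO : {w | G.Adj v w ∧ Odd (G.neighborSet w).ncard}
        = ↑(N.filter (fun u => Odd (G.neighborSet u).ncard)) := by
      ext x; simp [hmemN x, Finset.mem_filter, and_comm]
    have h4 : 4 ≤ (N.filter (fun u => Odd (G.neighborSet u).ncard)).card := by
      rwa [hO, Set.ncard_coe_finset] at hodd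
    have hsplit := Finset.card_filter_add_card_filter_not
      (s := N) (p := fun u => Odd (G.neighborSet u).ncard)
    rw [← hEdef] at hsplit
    simp only [hNcard] at hsplit
    omega
  -- bad-color function on S
  set g : S → Fin 7 := fun u =>
    if hne : ((G.induce S).neighborSet u).Nonempty then Classical.choose (hc₀odd u hne)
    else 0 with hgdef
  have hgspec : ∀ (u : S) (hne : ((G.induce S).neighborSet u).Nonempty),
      Odd {w : S | (G.induce S).Adj u w ∧ c₀ w = g u}.ncard := by
    intro u hne
    have : g u = Classical.choose (hc₀odd u hne) := dif_pos hne
    rw [this]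
    exact Classical.choose_spec (hc₀odd u hne)
  -- forbidden colors
  set f : V → Fin 7 := fun w => if hw : w ∈ S then c₀ ⟨w, hw⟩ else 0 with hfdef
  set g' : V → Fin 7 := fun w => if hw : w ∈ S then g ⟨w, hw⟩ else 0 with hg'def
  set F : Finset (Fin 7) := N.image f ∪ E.image g' with hFdef
  have hFcard : F.card ≤ 6 := by
    calc F.card ≤ (N.image f).card + (E.image g').card := Finset.card_union_le _ _
    _ ≤ N.card + E.card := by
        gcongr <;> exact Finset.card_image_le
    _ ≤ 6 := by omega
  -- choose a free color b
  have : (Fᶜ : Finset (Fin 7)).Nonempty := by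
    rw [← Finset.card_pos, Finset.card_compl]
    simp only [Fintype.card_fin]
    omega
  obtain ⟨b, hb⟩ := this
  rw [Finset.mem_compl] at hb
  have hbN : b ∉ N.image f := fun hmem => hb (Finset.mem_union_left _ hmem)
  have hbE : b ∉ E.image g' := fun hmem => hb (Finset.mem_union_right _ hmem)
  -- the extended coloring
  set c : V → Fin 7 := fun w => if hw : w ∈ S then c₀ ⟨w, hw⟩ else b with hcdef
  have hvS : v ∉ S := by simp [hSdef]
  have hcv : c v = b := dif_neg hvS
  have hcS : ∀ w (hw : w ∈ S), c w = c₀ ⟨w, hw⟩ := fun w hw => dif_pos hw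
  have hmemS : ∀ w, w ≠ v → w ∈ S := by
    intro w hw; simp [hSdef, hw]
  -- neighbors of v never get color b
  have hbn : ∀ u, G.Adj v u → c u ≠ b := by
    intro u hadj hcu
    have huv : u ≠ v := fun h => (G.irrefl (h ▸ hadj))
    have huS : u ∈ S := hmemS u huv
    apply hbN
    refine Finset.mem_image.mpr ⟨u, (hmemN u).mpr hadj, ?_⟩
    rw [hfdef]; simp only [huS, dif_pos]
    rw [← hcS u huS, hcu]
  refine ⟨c, ?_, ?_⟩
  · -- proper
    intro x y hadj
    rcases eq_or_ne x v with rfl | hx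
    · rw [hcv]; exact fun h => hbn y hadj h.symm
    rcases eq_or_ne y v with rfl | hy
    · rw [hcv]; exact hbn x hadj.symm
    have hxS := hmemS x hx
    have hyS := hmemS y hy
    rw [hcS x hxS, hcS y hyS]
    exact hc₀prop ⟨x, hxS⟩ ⟨y, hyS⟩ hadj
  · -- odd condition
    intro u hune
    by_cases hdu : Odd (G.neighborSet u).ncard
    · exact exists_odd_fiber G c u hdu
    -- u has even degree, hence u ≠ v
    have huv : u ≠ v := by
      rintro rfl; rw [hdeg] at hdu; exact hdu ⟨2, rfl⟩
    have huS : u ∈ S := hmemS u huv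
    -- find a neighbor of u other than v
    have hwit : ∃ w, G.Adj u w ∧ w ≠ v := by
      obtain ⟨w, hw⟩ := hune
      rcases eq_or_ne w v with rfl | hwv
      · -- degree of u is even and positive, so ≥ 2
        have h1 : 0 < (G.neighborSet u).ncard :=
          (Set.ncard_pos (Set.toFinite _)).mpr ⟨w, hw⟩
        have h2 : 1 < (G.neighborSet u).ncard := by
          rcases Nat.even_or_odd (G.neighborSet u).ncard with he | ho
          · obtain ⟨k, hk⟩ := he; omega
          · exact absurd ho hdu
        obtain ⟨a₁, a₂, ha₁, ha₂, hne⟩ := (Set.one_lt_ncard_iff (Set.toFinite _)).mp h2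
        rcases eq_or_ne a₁ w with rfl | h
        · exact ⟨a₂, ha₂, fun hh => hne (hh.symm ▸ rfl)⟩
        · exact ⟨a₁, ha₁, h⟩
      · exact ⟨w, hw, hwv⟩
    obtain ⟨w, hadjw, hwv⟩ := hwit
    have hwS : w ∈ S := hmemS w hwv
    have hne' : ((G.induce S).neighborSet ⟨u, huS⟩).Nonempty := ⟨⟨w, hwS⟩, hadjw⟩
    set a : Fin 7 := g ⟨u, huS⟩ with hadef
    have hga := hgspec ⟨u, huS⟩ hne'
    have hva : ¬(G.Adj u v ∧ c v = a) := by
      rintro ⟨hadjuv, hcva⟩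
      have huE : u ∈ E := by
        rw [hEdef, Finset.mem_filter]
        exact ⟨(hmemN u).mpr hadjuv.symm, hdu⟩
      apply hbE
      refine Finset.mem_image.mpr ⟨u, huE, ?_⟩
      rw [hg'def]; simp only [huS, dif_pos]
      rw [← hadef, ← hcva, hcv]
    refine ⟨a, ?_⟩
    rw [ncard_fiber_transfer G v c₀ c hcS u huS a hva]
    exact hga
end

section
/- Let G be a finite simple graph and let v be a vertex of odd degree in G such that d(v) + e(v) ≤ 6, where d(v) is the degree of v and e(v) is the number of neighbors of v whose degree in G is even. If the graph G − v obtained by deleting v has an odd 7-coloring, then G has an odd 7-coloring. -/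
/-- Parity pigeonhole: if a finite set has odd cardinality, some color class
within it has odd cardinality. -/
lemma exists_odd_fiber_s11 {V : Type*} {N : Set V} (hN : N.Finite)
    (ho : Odd N.ncard) (c : V → Fin 7) :
    ∃ a : Fin 7, Odd {w | w ∈ N ∧ c w = a}.ncard := by
  classical
  by_contra hcon
  push_neg at hcon
  simp only [Nat.not_odd_iff_even] at hcon
  have hfib : ∀ a : Fin 7, {w | w ∈ N ∧ c w = a} =
      (hN.toFinset.filter (fun w => c w = a) : Finset V) := by
    intro a; ext w; simp [Set.Finite.mem_toFinset]
  have key : N.ncard = ∑ a : Fin 7, {w | w ∈ N ∧ c w = a}.ncard := by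
    rw [Set.ncard_eq_toFinset_card _ hN,
      Finset.card_eq_sum_card_fiberwise (f := c) (t := Finset.univ)
        (fun w _ => Finset.mem_univ _)]
    refine Finset.sum_congr rfl fun a _ => ?_
    rw [hfib a, Set.ncard_coe_finset]
  have : Even N.ncard := by
    rw [key]; exact Finset.even_sum _ (fun a _ => hcon a)
  exact (Nat.not_even_iff_odd.mpr ho) this

/-- If `v` has odd degree and `d(v) + e(v) ≤ 6`, where `e(v)` is the number of
neighbors of `v` of even degree, and `G - v` has an odd 7-coloring, then so does
`G`. -/
theorem hasOddColoring_of_delete_odd_vertex {V : Type*} [Fintype V]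
    (G : SimpleGraph V) (v : V) (hodd : Odd (G.neighborSet v).ncard)
    (hle : (G.neighborSet v).ncard
        + {w | G.Adj v w ∧ Even (G.neighborSet w).ncard}.ncard ≤ 6)
    (h : HasOddColoring (G.induce ({v}ᶜ : Set V)) 7) :
    HasOddColoring G 7 := by
  classical
  obtain ⟨c₀, hp₀, ho₀⟩ := h
  have hmem : ∀ {u : V}, u ≠ v → u ∈ ({v}ᶜ : Set V) := fun hu => by simpa using hu
  set c' : V → Fin 7 := fun u => if h : u = v then 0 else c₀ ⟨u, hmem h⟩ with hc'def
  have hc' : ∀ (u : V) (hu : u ≠ v), c' u = c₀ ⟨u, hmem hu⟩ := fun u hu => dif_neg hu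
  -- transfer of color fibers from the induced graph
  have htrans : ∀ (u : V) (hu : u ≠ v) (a : Fin 7),
      {x | x ≠ v ∧ G.Adj u x ∧ c' x = a} =
        Subtype.val '' {x : ({v}ᶜ : Set V) |
          (G.induce ({v}ᶜ : Set V)).Adj ⟨u, hmem hu⟩ x ∧ c₀ x = a} := by
    intro u hu a
    ext y
    constructor
    · rintro ⟨hyv, hadj, hcy⟩
      refine ⟨⟨y, hmem hyv⟩, ⟨hadj, ?_⟩, rfl⟩
      rw [← hc' y hyv]; exact hcy
    · rintro ⟨⟨y', hy'⟩, ⟨hadj, hcy⟩, rfl⟩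
      have hyv : y' ≠ v := by simpa using hy'
      exact ⟨hyv, hadj, by rw [hc' y' hyv]; exact hcy⟩
  have hncard : ∀ (u : V) (hu : u ≠ v) (a : Fin 7),
      {x | x ≠ v ∧ G.Adj u x ∧ c' x = a}.ncard =
      {x : ({v}ᶜ : Set V) |
        (G.induce ({v}ᶜ : Set V)).Adj ⟨u, hmem hu⟩ x ∧ c₀ x = a}.ncard := by
    intro u hu a
    rw [htrans u hu a, Set.ncard_image_of_injective _ Subtype.val_injective]
  -- for each even-degree neighbor of v there is a color appearing oddly in its
  -- neighborhood away from v
  have hbadex : ∀ w : V, G.Adj v w → Even (G.neighborSet w).ncard →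
      ∃ a : Fin 7, Odd {x | x ≠ v ∧ G.Adj w x ∧ c' x = a}.ncard := by
    intro w hvw hev
    have hwv : w ≠ v := fun h => G.irrefl (h ▸ hvw)
    have hx : ∃ x, x ≠ v ∧ G.Adj w x := by
      by_contra hcon
      push_neg at hcon
      have hNw : G.neighborSet w = {v} := by
        ext x
        simp only [SimpleGraph.mem_neighborSet, Set.mem_singleton_iff]
        constructor
        · intro hx
          by_contra hxv
          exact hcon x hxv hx
        · intro hx; subst hx; exact hvw.symm
      rw [hNw, Set.ncard_singleton] at hev
      simp at hev
    obtain ⟨x, hxv, hwx⟩ := hx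
    have hne : ((G.induce ({v}ᶜ : Set V)).neighborSet ⟨w, hmem hwv⟩).Nonempty :=
      ⟨⟨x, hmem hxv⟩, hwx⟩
    obtain ⟨a, ha⟩ := ho₀ ⟨w, hmem hwv⟩ hne
    refine ⟨a, ?_⟩
    rw [hncard w hwv a]
    exact ha
  -- choose such a "bad" color for every vertex where possible
  set bad : V → Fin 7 := fun w =>
    if hw : ∃ a : Fin 7, Odd {x | x ≠ v ∧ G.Adj w x ∧ c' x = a}.ncard
    then Classical.choose hw else 0 with hbaddef
  have hbad : ∀ w : V, G.Adj v w → Even (G.neighborSet w).ncard →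
      Odd {x | x ≠ v ∧ G.Adj w x ∧ c' x = bad w}.ncard := by
    intro w hvw hev
    have hw := hbadex w hvw hev
    simp only [hbaddef, dif_pos hw]
    exact Classical.choose_spec hw
  -- the forbidden colors for v
  set F : Set (Fin 7) := (c' '' G.neighborSet v) ∪
    (bad '' {w | G.Adj v w ∧ Even (G.neighborSet w).ncard}) with hFdef
  have hF : F.ncard ≤ 6 := by
    refine le_trans (Set.ncard_union_le _ _) (le_trans ?_ hle)
    exact add_le_add (Set.ncard_image_le (Set.toFinite _))
      (Set.ncard_image_le (Set.toFinite _))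
  have hex : ∃ a : Fin 7, a ∉ F := by
    by_contra hcon
    push_neg at hcon
    have : F = Set.univ := Set.eq_univ_of_forall hcon
    rw [this, Set.ncard_univ, Nat.card_eq_fintype_card, Fintype.card_fin] at hF
    omega
  obtain ⟨a, haF⟩ := hex
  set c : V → Fin 7 := fun u => if u = v then a else c' u with hcdef
  have hcv : c v = a := if_pos rfl
  have hcne : ∀ u, u ≠ v → c u = c' u := fun u hu => if_neg hu
  refine ⟨c, ?_, ?_⟩
  · -- properness
    intro u w hadj
    by_cases huv : u = v
    · subst huv
      have hwv : w ≠ u := fun hh => G.irrefl (hh ▸ hadj)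
      rw [hcv, hcne w hwv]
      intro heq
      exact haF (Or.inl ⟨w, hadj, heq.symm⟩)
    · by_cases hwv : w = v
      · subst hwv
        rw [hcv, hcne u huv]
        intro heq
        exact haF (Or.inl ⟨u, hadj.symm, heq⟩)
      · rw [hcne u huv, hcne w hwv, hc' u huv, hc' w hwv]
        exact hp₀ ⟨u, hmem huv⟩ ⟨w, hmem hwv⟩ hadj
  · -- odd condition
    intro u hu
    by_cases huv : u = v
    · subst huv
      obtain ⟨a', ha'⟩ := exists_odd_fiber_s11 (Set.toFinite (G.neighborSet u)) hodd c
      exact ⟨a', ha'⟩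
    · rcases Nat.even_or_odd (G.neighborSet u).ncard with hev | hou
      · by_cases hadj : G.Adj u v
        · -- even degree and adjacent to v: use the "bad" color of u
          have hvw : G.Adj v u := hadj.symm
          have hb := hbad u hvw hev
          have hne : a ≠ bad u := by
            intro heq
            exact haF (Or.inr ⟨u, ⟨hvw, hev⟩, heq.symm⟩)
          refine ⟨bad u, ?_⟩
          have hset : {w | G.Adj u w ∧ c w = bad u} =
              {x | x ≠ v ∧ G.Adj u x ∧ c' x = bad u} := by
            ext y
            constructor
            · rintro ⟨hy, hcy⟩
              have hyv : y ≠ v := by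
                rintro rfl
                rw [hcv] at hcy
                exact hne hcy
              exact ⟨hyv, hy, by rw [← hcne y hyv]; exact hcy⟩
            · rintro ⟨hyv, hy, hcy⟩
              exact ⟨hy, by rw [hcne y hyv]; exact hcy⟩
          rw [hset]
          exact hb
        · -- not adjacent to v: neighborhood unchanged
          obtain ⟨x, hx⟩ := hu
          have hxv : x ≠ v := fun h => hadj (h ▸ hx)
          have hne : ((G.induce ({v}ᶜ : Set V)).neighborSet ⟨u, hmem huv⟩).Nonempty :=
            ⟨⟨x, hmem hxv⟩, hx⟩
          obtain ⟨a', ha'⟩ := ho₀ ⟨u, hmem huv⟩ hne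
          refine ⟨a', ?_⟩
          have hset : {w | G.Adj u w ∧ c w = a'} =
              {x | x ≠ v ∧ G.Adj u x ∧ c' x = a'} := by
            ext y
            constructor
            · rintro ⟨hy, hcy⟩
              have hyv : y ≠ v := fun h => hadj (h ▸ hy)
              exact ⟨hyv, hy, by rw [← hcne y hyv]; exact hcy⟩
            · rintro ⟨hyv, hy, hcy⟩
              exact ⟨hy, by rw [hcne y hyv]; exact hcy⟩
          rw [hset, hncard u huv a']
          exact ha'
      · -- odd degree: automatic by parity pigeonhole
        obtain ⟨a', ha'⟩ := exists_odd_fiber_s11 (Set.toFinite (G.neighborSet u)) hou c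
        exact ⟨a', ha'⟩
end
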